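/- (Estimate of the generating sequence.) Let $\omega \in \mathbb{R}^n$ with divisor sequence $(\alpha_s)$ (defined from $\omega$ as the minimum modulus of nonzero divisors $e^{i\langle k,\omega\rangle \pm i\omega_j}-1$ with $|k| \le s+1$, and $\alpha_0 = 1$) and let $T_0 = 1$, $T_s = T_{s-1}/\alpha_s$. Suppose the sequence $W = \{W_s\}$ of homogeneous polynomial vector fields satisfies $\|W_s\| \le C^{s-1} A$ for constants $A > 0$, $C \ge 0$. Fix $r \ge 1$. Then the truncated generating sequence $X^{(r)} = \{X_1,\ldots,X_r,0,\ldots\}$ and normal form terms $Z_1,\ldots,Z_r$ produced by recursively solving the homological equations $D_\omega X_s + Z_s = \Psi_s$ (with $\Psi_1 = W_1$ and $\Psi_s = W_s + \sum_{j=1}^{s-1}\frac{j}{s}(E^X_{s-j}W_j - E^Z_{s-j}R_\omega X_j)$, taking $Z_s = P_{\mathcal N}\Psi_s$ and $X_s = D_\omega^{-1}P_{\mathcal R}\Psi_s$) satisfy, for $1 \le s \le r$, $\|X_s\| \le T_s\, B_r^{s-1} A / s$ and $\|Z_s\| \le T_{s-1}\, B_r^{s-1} A / s$, where $B_r = 4C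 + 8(r+2)A$. -/

import Mathlib

open Finset

/-- The Lie derivative of a function along a polynomial vector field. -/
noncomputable def lieV {σ : Type*} [Fintype σ] [DecidableEq σ]
    (V : σ → MvPolynomial σ ℂ) (f : MvPolynomial σ ℂ) : MvPolynomial σ ℂ :=
  ∑ l, V l * MvPolynomial.pderiv l f

/-- The Lie transform operators `E_0 = id`, `E_s = ∑_{j=1}^s (j/s) L_j ∘ E_{s-j}`. -/
noncomputable def EopF {F : Type*} [AddCommGroup F] [Module ℂ F]
    (L : ℕ → (F → F)) : ℕ → (F → F)
  | 0 => id
  | s + 1 => ((s + 1 : ℕ) : ℂ)⁻¹ •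
      ∑ j ∈ Finset.range (s + 1), (((j + 1 : ℕ) : ℂ)) • (L (j + 1) ∘ EopF L (s - j))
  decreasing_by exact Nat.lt_succ_of_le (Nat.sub_le s j)

/-- The polynomial norm: sum of the absolute values of the coefficients. -/
noncomputable def pnormP {σ : Type*} (f : MvPolynomial σ ℂ) : ℝ :=
  ∑ m ∈ f.support, ‖f.coeff m‖

/-- The polynomial norm of a vector field: sum of the norms of the components. -/
noncomputable def vnormP {σ : Type*} [Fintype σ] (V : σ → MvPolynomial σ ℂ) : ℝ :=
  ∑ l, pnormP (V l)

/-- The eigenvalues of the (complexified, diagonal) rotation `Λ_ω`. -/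
noncomputable def lamRot {n : ℕ} (ω : Fin n → ℝ) : Fin n ⊕ Fin n → ℂ :=
  Sum.elim (fun i => Complex.exp (-(Complex.I * (ω i : ℂ))))
    (fun i => Complex.exp (Complex.I * (ω i : ℂ)))

/-- The action of the rotation on functions: `(R_ω f)(z) = f(Λ_ω z)`. -/
noncomputable def Rfun {n : ℕ} (ω : Fin n → ℝ)
    (f : MvPolynomial (Fin n ⊕ Fin n) ℂ) : MvPolynomial (Fin n ⊕ Fin n) ℂ :=
  MvPolynomial.aeval (fun l => MvPolynomial.C (lamRot ω l) * MvPolynomial.X l) f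

/-- The pushforward action of the rotation on vector fields:
`(R_ω V)(z) = Λ_ω⁻¹ V(Λ_ω z)`. -/
noncomputable def RVF {n : ℕ} (ω : Fin n → ℝ)
    (V : Fin n ⊕ Fin n → MvPolynomial (Fin n ⊕ Fin n) ℂ) :
    Fin n ⊕ Fin n → MvPolynomial (Fin n ⊕ Fin n) ℂ :=
  fun l => MvPolynomial.C (lamRot ω l)⁻¹ * Rfun ω (V l)

/-- The eigenvalue of `D_ω = R_ω - id` on the monomial vector field `z^m e_l`. -/
noncomputable def cEig {n : ℕ} (ω : Fin n → ℝ) (m : (Fin n ⊕ Fin n) →₀ ℕ)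
    (l : Fin n ⊕ Fin n) : ℂ :=
  (lamRot ω l)⁻¹ * (m.prod fun i e => lamRot ω i ^ e) - 1

/-- The divisor `e^{i⟨k,ω⟩ ± iω_j} - 1` (`σ = true` for `+`, `false` for `-`). -/
noncomputable def dvsor {n : ℕ} (ω : Fin n → ℝ) (k : Fin n → ℕ) (j : Fin n)
    (σ : Bool) : ℂ :=
  Complex.exp (Complex.I * ((∑ i, (k i : ℝ) * ω i : ℝ) : ℂ) +
    (if σ then 1 else -1) * Complex.I * (ω j : ℂ)) - 1

/-- `β_s`: the minimum modulus of the nonzero divisors with `|k| = s+1`. -/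
noncomputable def betaSeq {n : ℕ} (ω : Fin n → ℝ) (s : ℕ) : ℝ :=
  sInf {x : ℝ | ∃ (k : Fin n → ℕ) (j : Fin n) (σ : Bool),
    (∑ i, k i) = s + 1 ∧ dvsor ω k j σ ≠ 0 ∧ x = ‖dvsor ω k j σ‖}

/-- `α_0 = 1`, `α_s = min (β_s, α_{s-1})`. -/
noncomputable def alphaSeq {n : ℕ} (ω : Fin n → ℝ) : ℕ → ℝ
  | 0 => 1
  | s + 1 => min (betaSeq ω (s + 1)) (alphaSeq ω s)

/-- `T_0 = 1`, `T_s = T_{s-1}/α_s`. -/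
noncomputable def Tseq {n : ℕ} (ω : Fin n → ℝ) : ℕ → ℝ
  | 0 => 1
  | s + 1 => Tseq ω s / alphaSeq ω (s + 1)

/-- The right-hand sides `Ψ_s` of the homological equations:
`Ψ_s = W_s + ∑_{j=1}^{s-1} (j/s)(E^X_{s-j} W_j - E^Z_{s-j} R_ω X_j)`. -/
noncomputable def PsiRHS {n : ℕ} (ω : Fin n → ℝ)
    (W X Z : ℕ → (Fin n ⊕ Fin n → MvPolynomial (Fin n ⊕ Fin n) ℂ)) (s : ℕ) :
    Fin n ⊕ Fin n → MvPolynomial (Fin n ⊕ Fin n) ℂ :=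
  W s + ((s : ℂ))⁻¹ • ∑ j ∈ Finset.Ico 1 s, ((j : ℂ)) •
    ((fun l => EopF (fun i => lieV (X i)) (s - j) (W j l)) -
     (fun l => EopF (fun i => lieV (Z i)) (s - j) (RVF ω (X j) l)))

namespace Aux
open MvPolynomial

variable {σ : Type*}

noncomputable def muP (k : ℕ) : ℝ := (catalan (k-1) : ℝ)
noncomputable def lamP (j : ℕ) : ℝ := if j ≤ 1 then 1 else ((j:ℝ)+1) * muP j / j
noncomputable def rhoP (m : ℕ) : ℝ := if m = 0 then 1 else muP (m+1) / 2

lemma pnormP_nonneg (f : MvPolynomial σ ℂ) : 0 ≤ pnormP f :=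
  Finset.sum_nonneg fun _ _ => norm_nonneg _

lemma pnormP_eq_sum_subset {f : MvPolynomial σ ℂ} {t : Finset (σ →₀ ℕ)}
    (h : f.support ⊆ t) : pnormP f = ∑ m ∈ t, ‖f.coeff m‖ := by
  refine Finset.sum_subset h (fun m _ hm => ?_)
  simp [MvPolynomial.notMem_support_iff.mp hm]

lemma pnormP_zero : pnormP (0 : MvPolynomial σ ℂ) = 0 := by simp [pnormP]

lemma pnormP_add_le (f g : MvPolynomial σ ℂ) :
    pnormP (f + g) ≤ pnormP f + pnormP g := by
  classical
  have hs : (f + g).support ⊆ f.support ∪ g.support := MvPolynomial.support_add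
  rw [pnormP_eq_sum_subset hs,
    pnormP_eq_sum_subset (Finset.subset_union_left (s₁ := f.support) (s₂ := g.support)),
    pnormP_eq_sum_subset (Finset.subset_union_right (s₁ := f.support) (s₂ := g.support)),
    ← Finset.sum_add_distrib]
  exact Finset.sum_le_sum fun m _ => by
    rw [MvPolynomial.coeff_add]; exact norm_add_le _ _

lemma pnormP_neg (f : MvPolynomial σ ℂ) : pnormP (-f) = pnormP f := by
  simp [pnormP, MvPolynomial.support_neg]

lemma pnormP_sum_le {ι : Type*} (t : Finset ι) (F : ι → MvPolynomial σ ℂ) :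
    pnormP (∑ i ∈ t, F i) ≤ ∑ i ∈ t, pnormP (F i) := by
  classical
  induction t using Finset.induction_on with
  | empty => simp [pnormP_zero]
  | insert _ _ h ih =>
    rw [Finset.sum_insert h, Finset.sum_insert h]
    exact le_trans (pnormP_add_le _ _) (by linarith)

lemma pnormP_smul_le (c : ℂ) (f : MvPolynomial σ ℂ) :
    pnormP (c • f) ≤ ‖c‖ * pnormP f := by
  rw [pnormP_eq_sum_subset (MvPolynomial.support_smul (a := c) (f := f)), pnormP,
    Finset.mul_sum]
  exact Finset.sum_le_sum fun m _ => by
    rw [MvPolynomial.coeff_smul]; simp [norm_smul]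

lemma norm_coeff_le_pnormP (f : MvPolynomial σ ℂ) (m : σ →₀ ℕ) :
    ‖f.coeff m‖ ≤ pnormP f := by
  by_cases h : m ∈ f.support
  · exact Finset.single_le_sum (f := fun m => ‖f.coeff m‖) (fun _ _ => norm_nonneg _) h
  · simp [MvPolynomial.notMem_support_iff.mp h, pnormP_nonneg]

lemma pnormP_monomial_le (d : σ →₀ ℕ) (a : ℂ) : pnormP (monomial d a) ≤ ‖a‖ := by
  classical
  by_cases h : a = 0
  · simp [h, pnormP_zero]
  · rw [pnormP_eq_sum_subset (MvPolynomial.support_monomial_subset (s := d) (a := a))]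
    simp [MvPolynomial.coeff_monomial]

lemma pnormP_le_of_coeff_le {f g : MvPolynomial σ ℂ} {t : ℝ} (_ht : 0 ≤ t)
    (h : ∀ m, ‖f.coeff m‖ ≤ t * ‖g.coeff m‖) : pnormP f ≤ t * pnormP g := by
  classical
  have hsub : f.support ⊆ g.support := by
    intro m hm
    rw [MvPolynomial.mem_support_iff] at hm ⊢
    intro hg
    have := h m
    rw [hg] at this
    simp only [norm_zero, mul_zero] at this
    exact hm (norm_eq_zero.mp (le_antisymm this (norm_nonneg _)))
  rw [pnormP, pnormP, Finset.mul_sum]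
  calc ∑ m ∈ f.support, ‖f.coeff m‖ ≤ ∑ m ∈ g.support, ‖f.coeff m‖ :=
        Finset.sum_le_sum_of_subset_of_nonneg hsub (fun _ _ _ => norm_nonneg _)
    _ ≤ ∑ m ∈ g.support, t * ‖g.coeff m‖ := Finset.sum_le_sum fun m _ => h m

lemma pnormP_monomial_mul_le (d : σ →₀ ℕ) (a : ℂ) (g : MvPolynomial σ ℂ) :
    pnormP (monomial d a * g) ≤ ‖a‖ * pnormP g := by
  classical
  have key : monomial d a * g = ∑ m ∈ g.support, monomial (d + m) (a * g.coeff m) := by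
    conv_lhs => rw [g.as_sum, Finset.mul_sum]
    exact Finset.sum_congr rfl fun m _ => by rw [MvPolynomial.monomial_mul]
  rw [key]
  refine le_trans (pnormP_sum_le _ _) ?_
  rw [pnormP, Finset.mul_sum]
  exact Finset.sum_le_sum fun m _ => le_trans (pnormP_monomial_le _ _) (by
    rw [norm_mul])

lemma pnormP_mul_le (f g : MvPolynomial σ ℂ) :
    pnormP (f * g) ≤ pnormP f * pnormP g := by
  classical
  conv_lhs => rw [f.as_sum, Finset.sum_mul]
  refine le_trans (pnormP_sum_le _ _) ?_
  calc ∑ m ∈ f.support, pnormP (monomial m (f.coeff m) * g)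
      ≤ ∑ m ∈ f.support, ‖f.coeff m‖ * pnormP g :=
        Finset.sum_le_sum fun m _ => pnormP_monomial_mul_le _ _ _
    _ = pnormP f * pnormP g := by rw [pnormP, pnormP, Finset.sum_mul]


lemma single_le_weight (m : σ →₀ ℕ) (l : σ) : m l ≤ m.sum fun _ e => e := by
  classical
  by_cases h : l ∈ m.support
  · exact Finset.single_le_sum (fun _ _ => Nat.zero_le _) h
  · simp [Finsupp.notMem_support_iff.mp h]

lemma degree_sub_single {m : σ →₀ ℕ} {l : σ} (h : m l ≠ 0) :
    ((m - Finsupp.single l 1).sum fun _ e => e) + 1 = m.sum fun _ e => e := by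
  classical
  have : m = (m - Finsupp.single l 1) + Finsupp.single l 1 := by
    ext i
    by_cases hi : i = l
    · subst hi
      simp [Finsupp.tsub_apply]
      omega
    · simp [Finsupp.tsub_apply, Finsupp.single_apply, Ne.symm hi]
  conv_rhs => rw [this]
  rw [Finsupp.sum_add_index (by simp) (by intros; rfl)]
  simp [Finsupp.sum_single_index]

lemma totalDegree_pderiv_le (f : MvPolynomial σ ℂ) (l : σ) (e : ℕ)
    (h : f.totalDegree ≤ e + 1) : (pderiv l f).totalDegree ≤ e := by
  classical
  conv_lhs => rw [f.as_sum, map_sum]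
  refine le_trans (totalDegree_finset_sum _ _) (Finset.sup_le fun m hm => ?_)
  rw [pderiv_monomial]
  by_cases hz : f.coeff m * (m l : ℂ) = 0
  · simp [hz]
  · rw [totalDegree_monomial _ hz]
    have hml : m l ≠ 0 := by
      intro h0; rw [h0] at hz; simp at hz
    have hd := degree_sub_single (m := m) (l := l) hml
    have := le_trans (le_totalDegree hm) h
    omega

lemma pnormP_pderiv_le (f : MvPolynomial σ ℂ) (l : σ) (d : ℕ)
    (h : f.totalDegree ≤ d) : pnormP (pderiv l f) ≤ d * pnormP f := by
  classical
  conv_lhs => rw [f.as_sum, map_sum]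
  refine le_trans (pnormP_sum_le _ _) ?_
  rw [pnormP, Finset.mul_sum]
  refine Finset.sum_le_sum fun m hm => ?_
  rw [pderiv_monomial]
  refine le_trans (pnormP_monomial_le _ _) ?_
  rw [norm_mul]
  have h1 : ‖(m l : ℂ)‖ = (m l : ℝ) := by
    rw [Complex.norm_natCast]
  have h2 : (m l : ℝ) ≤ d := by
    have := le_trans (single_le_weight m l) (le_trans (le_totalDegree hm) h)
    exact_mod_cast this
  calc ‖f.coeff m‖ * ‖(m l : ℂ)‖ = (m l : ℝ) * ‖f.coeff m‖ := by rw [h1]; ring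
    _ ≤ d * ‖f.coeff m‖ := by
        exact mul_le_mul_of_nonneg_right h2 (norm_nonneg _)

lemma pnormP_lieV_le [Fintype σ] [DecidableEq σ] (V : σ → MvPolynomial σ ℂ)
    (f : MvPolynomial σ ℂ) (d : ℕ) (h : f.totalDegree ≤ d) :
    pnormP (lieV V f) ≤ d * vnormP V * pnormP f := by
  rw [lieV]
  refine le_trans (pnormP_sum_le _ _) ?_
  have : ∀ l : σ, pnormP (V l * pderiv l f) ≤ pnormP (V l) * (d * pnormP f) := by
    intro l
    refine le_trans (pnormP_mul_le _ _) ?_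
    exact mul_le_mul_of_nonneg_left (pnormP_pderiv_le f l d h) (pnormP_nonneg _)
  refine le_trans (Finset.sum_le_sum fun l _ => this l) ?_
  rw [← Finset.sum_mul, vnormP]
  ring_nf
  exact le_refl _

lemma totalDegree_lieV_le [Fintype σ] [DecidableEq σ] (V : σ → MvPolynomial σ ℂ)
    (f : MvPolynomial σ ℂ) (e w : ℕ) (h : f.totalDegree ≤ e + 1)
    (hV : ∀ l, (V l).totalDegree ≤ w) : (lieV V f).totalDegree ≤ w + e := by
  rw [lieV]
  refine le_trans (totalDegree_finset_sum _ _) (Finset.sup_le fun l _ => ?_)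
  refine le_trans (totalDegree_mul _ _) ?_
  have := totalDegree_pderiv_le f l e h
  have := hV l
  omega


variable {n : ℕ}

lemma abs_lamRot (ω : Fin n → ℝ) (l : Fin n ⊕ Fin n) : ‖lamRot ω l‖ = 1 := by
  cases l <;> simp [lamRot, Complex.norm_exp]

noncomputable def lamProd (ω : Fin n → ℝ) (m : (Fin n ⊕ Fin n) →₀ ℕ) : ℂ :=
  m.prod fun i e => lamRot ω i ^ e

lemma abs_lamProd (ω : Fin n → ℝ) (m : (Fin n ⊕ Fin n) →₀ ℕ) :
    ‖lamProd ω m‖ = 1 := by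
  rw [lamProd, Finsupp.prod, norm_prod]
  refine Finset.prod_eq_one fun i _ => ?_
  rw [norm_pow, abs_lamRot, one_pow]

lemma Rfun_monomial (ω : Fin n → ℝ) (m : (Fin n ⊕ Fin n) →₀ ℕ) (c : ℂ) :
    Rfun ω (monomial m c) = monomial m (lamProd ω m * c) := by
  rw [Rfun, aeval_monomial, MvPolynomial.algebraMap_eq]
  have : (m.prod fun i k => (C (lamRot ω i) * X i) ^ k)
      = C (lamProd ω m) * (m.prod fun i k => (X i : MvPolynomial (Fin n ⊕ Fin n) ℂ) ^ k) := by
    rw [lamProd, Finsupp.prod, Finsupp.prod, Finsupp.prod, map_prod, ← Finset.prod_mul_distrib]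
    exact Finset.prod_congr rfl fun i _ => by rw [mul_pow, map_pow]
  rw [this, ← mul_assoc, ← C_mul, mul_comm c (lamProd ω m), ← monomial_eq]

lemma coeff_Rfun (ω : Fin n → ℝ) (f : MvPolynomial (Fin n ⊕ Fin n) ℂ)
    (m : (Fin n ⊕ Fin n) →₀ ℕ) :
    (Rfun ω f).coeff m = lamProd ω m * f.coeff m := by
  classical
  have : Rfun ω f = ∑ d ∈ f.support, monomial d (lamProd ω d * f.coeff d) := by
    conv_lhs => rw [f.as_sum]
    rw [Rfun, map_sum]
    exact Finset.sum_congr rfl fun d _ => Rfun_monomial ω d _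
  rw [this, coeff_sum]
  by_cases hm : m ∈ f.support
  · rw [Finset.sum_eq_single m]
    · simp [coeff_monomial]
    · intro d _ hd; simp [coeff_monomial, hd]
    · intro h; exact absurd hm h
  · rw [notMem_support_iff.mp hm, mul_zero]
    refine Finset.sum_eq_zero fun d hd => ?_
    have : d ≠ m := fun h => hm (h ▸ hd)
    simp [coeff_monomial, this]

lemma coeff_RVF (ω : Fin n → ℝ) (V : Fin n ⊕ Fin n → MvPolynomial (Fin n ⊕ Fin n) ℂ)
    (l : Fin n ⊕ Fin n) (m : (Fin n ⊕ Fin n) →₀ ℕ) :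
    (RVF ω V l).coeff m = (cEig ω m l + 1) * (V l).coeff m := by
  rw [RVF, coeff_C_mul, coeff_Rfun, cEig, lamProd]
  ring

lemma coeff_DV (ω : Fin n → ℝ) (V : Fin n ⊕ Fin n → MvPolynomial (Fin n ⊕ Fin n) ℂ)
    (l : Fin n ⊕ Fin n) (m : (Fin n ⊕ Fin n) →₀ ℕ) :
    ((RVF ω V - V) l).coeff m = cEig ω m l * (V l).coeff m := by
  rw [Pi.sub_apply, coeff_sub, coeff_RVF]
  ring

lemma norm_coeff_RVF (ω : Fin n → ℝ) (V : Fin n ⊕ Fin n → MvPolynomial (Fin n ⊕ Fin n) ℂ)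
    (l : Fin n ⊕ Fin n) (m : (Fin n ⊕ Fin n) →₀ ℕ) :
    ‖(RVF ω V l).coeff m‖ = ‖(V l).coeff m‖ := by
  rw [RVF, coeff_C_mul, coeff_Rfun, norm_mul, norm_mul]
  have h1 : ‖(lamRot ω l)⁻¹‖ = 1 := by
    rw [norm_inv]
    show (‖lamRot ω l‖)⁻¹ = 1
    rw [abs_lamRot]; norm_num
  have h2 : ‖lamProd ω m‖ = 1 := abs_lamProd ω m
  rw [h1, h2]; ring

lemma pnormP_RVF_le (ω : Fin n → ℝ) (V : Fin n ⊕ Fin n → MvPolynomial (Fin n ⊕ Fin n) ℂ)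
    (l : Fin n ⊕ Fin n) : pnormP (RVF ω V l) ≤ pnormP (V l) := by
  have := pnormP_le_of_coeff_le (f := RVF ω V l) (g := V l) (t := 1) zero_le_one
    (fun m => by rw [norm_coeff_RVF, one_mul])
  linarith

lemma support_subset_of_coeff {σ : Type*} {f g : MvPolynomial σ ℂ}
    (h : ∀ m, ‖f.coeff m‖ ≤ ‖g.coeff m‖) : f.support ⊆ g.support := by
  intro m hm
  rw [mem_support_iff] at hm ⊢
  intro hg
  have := h m
  rw [hg, norm_zero] at this
  exact hm (norm_eq_zero.mp (le_antisymm this (norm_nonneg _)))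

lemma totalDegree_le_of_support {σ : Type*} {f g : MvPolynomial σ ℂ}
    (h : f.support ⊆ g.support) : f.totalDegree ≤ g.totalDegree :=
  Finset.sup_mono h

lemma totalDegree_RVF_le (ω : Fin n → ℝ) (V : Fin n ⊕ Fin n → MvPolynomial (Fin n ⊕ Fin n) ℂ)
    (l : Fin n ⊕ Fin n) : (RVF ω V l).totalDegree ≤ (V l).totalDegree :=
  totalDegree_le_of_support (support_subset_of_coeff fun m => le_of_eq (norm_coeff_RVF ω V l m))


variable {ω : Fin n → ℝ} {r : ℕ}

lemma alpha_le_one (s : ℕ) : alphaSeq ω s ≤ 1 := by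
  induction s with
  | zero => simp [alphaSeq]
  | succ s ih => exact le_trans (min_le_right _ _) ih

lemma alpha_antitone {a b : ℕ} (h : a ≤ b) : alphaSeq ω b ≤ alphaSeq ω a := by
  induction b with
  | zero => simp at h; simp [h]
  | succ b ih =>
    rcases Nat.lt_or_ge a (b+1) with h' | h'
    · exact le_trans (min_le_right _ _) (ih (Nat.lt_succ_iff.mp h'))
    · have : a = b + 1 := le_antisymm h h'
      rw [this]

section
variable (hαpos : ∀ s, 1 ≤ s → s ≤ r → 0 < alphaSeq ω s)
include hαpos

lemma T_pos {s : ℕ} (hs : s ≤ r) : 0 < Tseq ω s := by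
  induction s with
  | zero => norm_num [Tseq]
  | succ s ih =>
    rw [Tseq]
    exact div_pos (ih (le_trans (Nat.le_succ s) hs)) (hαpos (s+1) (Nat.succ_le_succ (Nat.zero_le s)) hs)

lemma T_mono {a b : ℕ} (hab : a ≤ b) (hb : b ≤ r) : Tseq ω a ≤ Tseq ω b := by
  induction b with
  | zero => simp_all
  | succ b ih =>
    rcases Nat.lt_or_ge a (b+1) with h' | h'
    · have h1 : Tseq ω a ≤ Tseq ω b := ih (Nat.lt_succ_iff.mp h') (le_trans (Nat.le_succ b) hb)
      refine le_trans h1 ?_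
      rw [Tseq, le_div_iff₀ (hαpos (b+1) (by omega) hb)]
      calc Tseq ω b * alphaSeq ω (b+1) ≤ Tseq ω b * 1 :=
        mul_le_mul_of_nonneg_left (alpha_le_one _) (le_of_lt (T_pos hαpos (le_trans (Nat.le_succ b) hb)))
      _ = Tseq ω b := mul_one _
    · have : a = b + 1 := le_antisymm hab h'
      rw [this]

lemma T_one_le {s : ℕ} (hs : s ≤ r) : 1 ≤ Tseq ω s := by
  have := T_mono hαpos (Nat.zero_le s) hs
  simpa [Tseq] using this

lemma T_submult {a b : ℕ} (hab : a + b ≤ r) : Tseq ω a * Tseq ω b ≤ Tseq ω (a + b) := by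
  induction b with
  | zero => simp [Tseq]
  | succ b ih =>
    have hab' : a + b ≤ r := by omega
    have hαb : 0 < alphaSeq ω (b+1) := hαpos (b+1) (by omega) (by omega)
    have hαab : 0 < alphaSeq ω (a+b+1) := hαpos (a+b+1) (by omega) (by omega)
    have h1 : Tseq ω a * Tseq ω (b+1) = (Tseq ω a * Tseq ω b) / alphaSeq ω (b+1) := by
      rw [Tseq]; ring
    rw [h1, show a + (b+1) = (a+b) + 1 from rfl, Tseq]
    exact div_le_div₀ (le_of_lt (T_pos hαpos hab')) (ih hab') hαab
      (alpha_antitone (by omega))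

end

lemma catalan_pos (k : ℕ) : 0 < catalan k := by
  have h := succ_mul_catalan_eq_centralBinom k
  have h2 := Nat.centralBinom_pos k
  by_contra h3
  push_neg at h3
  interval_cases c : catalan k
  omega

lemma catalan_ratio (k : ℕ) : (k + 2) * catalan (k+1) = (4*k+2) * catalan k := by
  have h1 := Nat.succ_mul_centralBinom_succ k
  have h2 := succ_mul_catalan_eq_centralBinom k
  have h3 := succ_mul_catalan_eq_centralBinom (k+1)
  have : (k+1) * ((k+2) * catalan (k+1)) = (k+1) * ((4*k+2) * catalan k) := by
    calc (k+1) * ((k+2) * catalan (k+1)) = (k+1) * ((k+1+1) * catalan (k+1)) := by ring_nf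
      _ = (k+1) * ((k+1).centralBinom) := by rw [h3]
      _ = 2 * (2*k+1) * k.centralBinom := h1
      _ = 2 * (2*k+1) * ((k+1) * catalan k) := by rw [h2]
      _ = (k+1) * ((4*k+2) * catalan k) := by ring
  exact Nat.eq_of_mul_eq_mul_left (by omega) this

lemma catalan_mono : Monotone catalan := by
  apply monotone_nat_of_le_succ
  intro k
  have h := catalan_ratio k
  have : (k+2) * catalan k ≤ (k+2) * catalan (k+1) := by
    rw [h]
    exact Nat.mul_le_mul_right _ (by omega)
  exact Nat.le_of_mul_le_mul_left this (by omega)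

lemma catalan_four : catalan 4 = 14 := by
  have h := catalan_ratio 3
  simp [catalan_three] at h
  omega

lemma mu_pos (k : ℕ) : 0 < muP k := by
  rw [muP]; exact_mod_cast catalan_pos _

lemma mu_one_le (k : ℕ) : 1 ≤ muP k := by
  rw [muP]; exact_mod_cast catalan_pos _

lemma mu_one : muP 1 = 1 := by simp [muP, catalan_zero]
lemma mu_two : muP 2 = 1 := by simp [muP, catalan_one]
lemma mu_three : muP 3 = 2 := by simp [muP, catalan_two]
lemma mu_four : muP 4 = 5 := by simp [muP, catalan_three]
lemma mu_five : muP 5 = 14 := by simp [muP, catalan_four]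

lemma mu_mono {a b : ℕ} (h : a ≤ b) : muP a ≤ muP b := by
  rw [muP, muP]
  exact_mod_cast catalan_mono (by omega : a - 1 ≤ b - 1)

lemma mu_ratio {k : ℕ} (hk : 1 ≤ k) : ((k:ℝ) + 1) * muP (k+1) = (4*k - 2) * muP k := by
  obtain ⟨t, rfl⟩ := Nat.exists_eq_add_of_le hk
  have h := catalan_ratio t
  rw [muP, muP]
  have e1 : 1 + t + 1 - 1 = t + 1 := by omega
  have e2 : 1 + t - 1 = t := by omega
  rw [e1, e2]
  have := congrArg (fun x : ℕ => (x : ℝ)) h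
  push_cast at this ⊢
  nlinarith [this]

lemma mu_double {k : ℕ} (hk : 2 ≤ k) : 2 * muP k ≤ muP (k+1) := by
  have h := mu_ratio (le_trans one_le_two hk)
  have hp := mu_pos k
  have hk' : (2:ℝ) ≤ k := by exact_mod_cast hk
  nlinarith

lemma mu_conv (m : ℕ) :
    ∑ i ∈ range (m+1), muP (i+1) * muP (m+1-i) = muP (m+2) := by
  have h := catalan_succ m
  rw [Fin.sum_univ_eq_sum_range (fun i => catalan i * catalan (m - i)) (m+1)] at h
  have : muP (m+2) = ((catalan (m+1) : ℕ) : ℝ) := by rw [muP]; norm_num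
  rw [this, h]
  push_cast
  refine Finset.sum_congr rfl fun i hi => ?_
  rw [mem_range] at hi
  rw [muP, muP]
  have e1 : i + 1 - 1 = i := by omega
  have e2 : m + 1 - i - 1 = m - i := by omega
  rw [e1, e2]

lemma two_cb_le (n : ℕ) (hn : 1 ≤ n) : 2 * Nat.centralBinom n ≤ 4 ^ n := by
  induction n with
  | zero => omega
  | succ n ih =>
    rcases Nat.eq_or_lt_of_le hn with h | h
    · rw [← h]; norm_num [Nat.centralBinom]
    · have hn' : 1 ≤ n := by omega
      have step : Nat.centralBinom (n+1) ≤ 4 * Nat.centralBinom n := by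
        have h1 := Nat.succ_mul_centralBinom_succ n
        have : (n+1) * Nat.centralBinom (n+1) ≤ (n+1) * (4 * Nat.centralBinom n) := by
          rw [h1]; nlinarith [Nat.centralBinom_pos n]
        exact Nat.le_of_mul_le_mul_left this (by omega)
      calc 2 * Nat.centralBinom (n+1) ≤ 4 * (2 * Nat.centralBinom n) := by omega
        _ ≤ 4 * 4 ^ n := by omega
        _ = 4 ^ (n+1) := by ring

lemma lam_nonneg (j : ℕ) : 0 ≤ lamP j := by
  have := mu_pos j
  rw [lamP]
  split
  · norm_num
  · positivity

lemma rho_nonneg (m : ℕ) : 0 ≤ rhoP m := by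
  have := mu_pos (m+1)
  rw [rhoP]; split
  · norm_num
  · positivity

lemma rho_zero : rhoP 0 = 1 := by simp [rhoP]
lemma lam_one : lamP 1 = 1 := by simp [lamP]

/-- Final conversion: `s·λ_s ≤ 4^{s-1}`. -/
lemma lam_final {s : ℕ} (hs : 1 ≤ s) : (s:ℝ) * lamP s ≤ 4 ^ (s-1) := by
  rcases Nat.eq_or_lt_of_le hs with h | h
  · rw [← h]; simp [lam_one]
  · have hs2 : 2 ≤ s := h
    have hnat : (s+1) * catalan (s-1) ≤ 4 ^ (s-1) := by
      have h1 : s * catalan (s-1) = Nat.centralBinom (s-1) := by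
        have := succ_mul_catalan_eq_centralBinom (s-1)
        have e : s - 1 + 1 = s := by omega
        rw [e] at this; exact this
      have h2 : catalan (s-1) ≤ Nat.centralBinom (s-1) := by
        calc catalan (s-1) ≤ s * catalan (s-1) := Nat.le_mul_of_pos_left _ (by omega)
          _ = _ := h1
      calc (s+1) * catalan (s-1) = s * catalan (s-1) + catalan (s-1) := by ring
        _ ≤ 2 * Nat.centralBinom (s-1) := by omega
        _ ≤ 4 ^ (s-1) := two_cb_le _ (by omega)
    have hlam : lamP s = ((s:ℝ)+1) * muP s / s := by
      rw [lamP, if_neg (by omega)]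
    rw [hlam]
    have heq : (s:ℝ) * (((s:ℝ)+1) * muP s / s) = ((s:ℝ)+1) * muP s := by
      field_simp
    have hcast : ((s:ℝ)+1) * muP s ≤ 4 ^ (s-1) := by
      rw [muP]
      calc ((s:ℝ)+1) * (catalan (s-1) : ℝ) = (((s+1) * catalan (s-1) : ℕ) : ℝ) := by push_cast; ring
        _ ≤ ((4 ^ (s-1) : ℕ) : ℝ) := by exact_mod_cast hnat
        _ = 4 ^ (s-1) := by push_cast; ring
    calc (s:ℝ) * (((s:ℝ)+1) * muP s / s) = ((s:ℝ)+1) * muP s := heq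
      _ ≤ 4 ^ (s-1) := hcast


lemma rho_succ (m : ℕ) (h : m ≠ 0) : rhoP m = muP (m+1) / 2 := by simp [rhoP, h]

/-- `j·λ_j ≤ (j+1)·μ_j` for `j ≥ 1`. -/
lemma wt_le {j : ℕ} (hj : 1 ≤ j) : (j:ℝ) * lamP j ≤ ((j:ℝ)+1) * muP j := by
  rcases Nat.eq_or_lt_of_le hj with h | h
  · rw [← h]; simp [lam_one, mu_one]
  · rw [lamP, if_neg (by omega)]
    have hjpos : (0:ℝ) < j := by positivity
    rw [mul_div_assoc']
    rw [mul_comm (j:ℝ) (((j:ℝ)+1) * muP j), mul_div_assoc]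
    rw [div_self (ne_of_gt hjpos), mul_one]

/-- symmetrized weighted convolution:
`2 ∑_{j≤m} (j+2) μ_{j+1} μ_{m+1-j} = (m+4) μ_{m+2}`. -/
lemma sym_conv (m : ℕ) :
    2 * ∑ j ∈ range (m+1), ((j:ℝ)+2) * (muP (j+1) * muP (m+1-j))
      = ((m:ℝ)+4) * muP (m+2) := by
  set F : ℕ → ℝ := fun j => ((j:ℝ)+2) * (muP (j+1) * muP (m+1-j)) with hF
  have hrefl : ∑ j ∈ range (m+1), F (m - j) = ∑ j ∈ range (m+1), F j := by
    have := Finset.sum_range_reflect F (m+1)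
    simpa using this
  have key : (∑ j ∈ range (m+1), F (m-j)) + ∑ j ∈ range (m+1), F j
      = ∑ j ∈ range (m+1), ((m:ℝ)+4) * (muP (j+1) * muP (m+1-j)) := by
    rw [← Finset.sum_add_distrib]
    refine Finset.sum_congr rfl fun j hj => ?_
    rw [mem_range] at hj
    have hjm : j ≤ m := by omega
    have e1 : m - j + 1 = m + 1 - j := by omega
    have e2 : m + 1 - (m - j) = j + 1 := by omega
    have e3 : ((m - j : ℕ) : ℝ) = (m:ℝ) - j := by push_cast [hjm]; ring
    rw [hF]
    simp only []
    rw [e1, e2, e3]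
    ring
  have hconv := mu_conv m
  calc 2 * ∑ j ∈ range (m+1), F j
      = (∑ j ∈ range (m+1), F (m-j)) + ∑ j ∈ range (m+1), F j := by rw [hrefl]; ring
    _ = ∑ j ∈ range (m+1), ((m:ℝ)+4) * (muP (j+1) * muP (m+1-j)) := key
    _ = ((m:ℝ)+4) * ∑ j ∈ range (m+1), muP (j+1) * muP (m+1-j) := by rw [Finset.mul_sum]
    _ = ((m:ℝ)+4) * muP (m+2) := by rw [hconv]

/-- (★): `∑_{j<m+1} (j+1) λ_{j+1} ρ_{m-j} ≤ 2(m+1) ρ_{m+1}`. -/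
lemma star1 (m : ℕ) :
    ∑ j ∈ range (m+1), ((j:ℝ)+1) * lamP (j+1) * rhoP (m-j)
      ≤ 2*((m:ℝ)+1)*rhoP (m+1) := by
  rcases Nat.eq_zero_or_pos m with rfl | hm
  · simp [lam_one, rho_zero, rho_succ 1 one_ne_zero, mu_two]
  · -- m ≥ 1
    rw [Finset.sum_range_succ]
    have hne : ((m:ℝ)+1) ≠ 0 := by positivity
    have hlam1 : lamP (m+1) = ((m:ℝ)+2) * muP (m+1) / ((m:ℝ)+1) := by
      rw [lamP, if_neg (by omega)]
      push_cast
      ring_nf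
    have hlast : ((m:ℝ)+1) * lamP (m+1) * rhoP (m-m)
        = ((m:ℝ)+2) * muP (m+1) := by
      rw [Nat.sub_self, rho_zero, mul_one, hlam1]
      field_simp
    rw [hlast]
    have hmain : ∑ j ∈ range m, ((j:ℝ)+1) * lamP (j+1) * rhoP (m-j)
        ≤ ∑ j ∈ range m, ((j:ℝ)+2) * (muP (j+1) * muP (m+1-j)) / 2 := by
      refine Finset.sum_le_sum fun j hj => ?_
      rw [mem_range] at hj
      have h1 : rhoP (m-j) = muP (m+1-j) / 2 := by
        rw [rho_succ _ (by omega)]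
        congr 2
        omega
      rw [h1]
      have h2 : ((j:ℝ)+1) * lamP (j+1) ≤ ((j:ℝ)+2) * muP (j+1) := by
        have := wt_le (j := j+1) (by omega)
        push_cast at this
        calc ((j:ℝ)+1) * lamP (j+1) ≤ ((j:ℝ)+1+1) * muP (j+1) := this
          _ = ((j:ℝ)+2) * muP (j+1) := by ring
      have h3 : 0 ≤ muP (m+1-j) / 2 := by
        have := mu_pos (m+1-j); positivity
      calc ((j:ℝ)+1) * lamP (j+1) * (muP (m+1-j)/2)
          ≤ ((j:ℝ)+2) * muP (j+1) * (muP (m+1-j)/2) :=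
            mul_le_mul_of_nonneg_right h2 h3
        _ = ((j:ℝ)+2) * (muP (j+1) * muP (m+1-j)) / 2 := by ring
    -- relate range m to range (m+1)
    have hsym := sym_conv m
    have hfull : ∑ j ∈ range (m+1), ((j:ℝ)+2) * (muP (j+1) * muP (m+1-j))
        = ∑ j ∈ range m, ((j:ℝ)+2) * (muP (j+1) * muP (m+1-j))
          + ((m:ℝ)+2) * muP (m+1) := by
      rw [Finset.sum_range_succ, show m + 1 - m = 1 from by omega, mu_one, mul_one]
    have hS : ∑ j ∈ range m, ((j:ℝ)+2) * (muP (j+1) * muP (m+1-j))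
        = ((m:ℝ)+4) * muP (m+2) / 2 - ((m:ℝ)+2) * muP (m+1) := by
      linarith
    have hsum2 : ∑ j ∈ range m, ((j:ℝ)+2) * (muP (j+1) * muP (m+1-j)) / 2
        = (∑ j ∈ range m, ((j:ℝ)+2) * (muP (j+1) * muP (m+1-j))) / 2 := by
      rw [Finset.sum_div]
    have hb : ∑ j ∈ range m, ((j:ℝ)+1) * lamP (j+1) * rhoP (m-j)
        ≤ (((m:ℝ)+4) * muP (m+2) / 2 - ((m:ℝ)+2) * muP (m+1)) / 2 := by
      calc ∑ j ∈ range m, ((j:ℝ)+1) * lamP (j+1) * rhoP (m-j)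
          ≤ ∑ j ∈ range m, ((j:ℝ)+2) * (muP (j+1) * muP (m+1-j)) / 2 := hmain
        _ = (∑ j ∈ range m, ((j:ℝ)+2) * (muP (j+1) * muP (m+1-j))) / 2 := hsum2
        _ = _ := by rw [hS]
    rw [rho_succ (m+1) (by omega)]
    push_cast
    have hd : 2 * muP (m+1) ≤ muP (m+2) := mu_double (by omega)
    have hmu1 := mu_pos (m+1)
    have hmu2 := mu_pos (m+2)
    have hm1 : (1:ℝ) ≤ (m:ℝ) := by exact_mod_cast hm
    nlinarith [hb]

/-- `F_t = ∑_{i<t} (i+1) μ_{t+1-i}`. -/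
noncomputable def FRs (t : ℕ) : ℝ := ∑ i ∈ range t, ((i:ℝ)+1) * muP (t+1-i)

lemma FR_le : ∀ t : ℕ, 1 ≤ t → FRs t ≤ 4 * muP (t+1) := by
  have hstep : ∀ t : ℕ, 3 ≤ t → FRs t ≤ 4 * muP (t+1) → FRs (t+1) ≤ 4 * muP (t+2) := by
    intro t ht ih
    have hdecomp : FRs (t+1) = muP (t+2) + ∑ i ∈ range t, ((i:ℝ)+2) * muP (t+1-i) := by
      rw [FRs, Finset.sum_range_succ']
      have : ∀ i ∈ range t, (((i+1:ℕ):ℝ)+1) * muP (t+1+1-(i+1)) = ((i:ℝ)+2) * muP (t+1-i) := by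
        intro i hi
        rw [mem_range] at hi
        rw [show t+1+1-(i+1) = t+1-i from by omega]
        push_cast
        ring
      rw [Finset.sum_congr rfl this]
      push_cast
      ring
    have hsplit : ∑ i ∈ range t, ((i:ℝ)+2) * muP (t+1-i) = FRs t + ∑ i ∈ range t, muP (t+1-i) := by
      rw [FRs, ← Finset.sum_add_distrib]
      exact Finset.sum_congr rfl fun i _ => by ring
    have hG : ∑ i ∈ range t, muP (t+1-i) ≤ FRs t := by
      rw [FRs]
      refine Finset.sum_le_sum fun i hi => ?_
      have h1 := mu_pos (t+1-i)
      nlinarith [Nat.cast_nonneg (α := ℝ) i]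
    have hr : ((t:ℝ)+1+1) * muP (t+2) = (4*(t+1) - 2) * muP (t+1) := by
      have := mu_ratio (k := t+1) (by omega)
      push_cast at this
      convert this using 2 <;> push_cast <;> ring
    have ht' : (3:ℝ) ≤ (t:ℝ) := by exact_mod_cast ht
    have hmu := mu_pos (t+1)
    have hmu2 := mu_pos (t+2)
    -- 8 μ_{t+1} ≤ 3 μ_{t+2}
    have h8 : 8 * muP (t+1) ≤ 3 * muP (t+2) := by nlinarith
    calc FRs (t+1) = muP (t+2) + (FRs t + ∑ i ∈ range t, muP (t+1-i)) := by
          rw [hdecomp, hsplit]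
      _ ≤ muP (t+2) + (4 * muP (t+1) + 4 * muP (t+1)) := by linarith
      _ ≤ 4 * muP (t+2) := by linarith
  intro t ht
  induction t with
  | zero => omega
  | succ t ih =>
    rcases Nat.lt_or_ge t 3 with h3 | h3
    · interval_cases t
      · rw [show (0:ℕ)+1 = 1 from rfl, FRs, Finset.sum_range_one]
        norm_num [mu_two]
      · rw [show (1:ℕ)+1 = 2 from rfl, FRs, Finset.sum_range_succ, Finset.sum_range_one]
        norm_num [mu_two, mu_three]
      · rw [show (2:ℕ)+1 = 3 from rfl, FRs, Finset.sum_range_succ, Finset.sum_range_succ,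
          Finset.sum_range_one]
        norm_num [mu_two, mu_three, mu_four]
    · exact hstep t h3 (ih (by omega))

/-- (★★): for `s ≥ 2`:
`s + ∑_{j=1}^{s-1} j ρ_{s-j} (1+λ_j) ≤ s λ_s`. -/
lemma star2 {s : ℕ} (hs : 2 ≤ s) :
    (s:ℝ) + ∑ j ∈ Ico 1 s, (j:ℝ) * rhoP (s-j) * (1 + lamP j) ≤ (s:ℝ) * lamP s := by
  have hslam : (s:ℝ) * lamP s = ((s:ℝ)+1) * muP s := by
    rw [lamP, if_neg (by omega)]
    have hne : ((s:ℝ)) ≠ 0 := by positivity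
    field_simp
  rw [hslam]
  obtain ⟨t, rfl⟩ : ∃ t, s = t + 1 := ⟨s - 1, by omega⟩
  have ht : 1 ≤ t := by omega
  -- convert sum over Ico to range
  have hconv : ∑ j ∈ Ico 1 (t+1), (j:ℝ) * rhoP (t+1-j) * (1 + lamP j)
      = ∑ i ∈ range t, ((i:ℝ)+1) * rhoP (t-i) * (1 + lamP (i+1)) := by
    rw [Finset.sum_Ico_eq_sum_range]
    simp only [Nat.add_sub_cancel]
    refine Finset.sum_congr rfl fun i hi => ?_
    rw [show t+1-(1+i) = t-i from by omega, show 1+i = i+1 from by omega]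
    push_cast
    ring
  rw [hconv]
  -- split the sum
  have hsplit : ∑ i ∈ range t, ((i:ℝ)+1) * rhoP (t-i) * (1 + lamP (i+1))
      = (∑ i ∈ range t, ((i:ℝ)+1) * rhoP (t-i))
        + ∑ i ∈ range t, ((i:ℝ)+1) * lamP (i+1) * rhoP (t-i) := by
    rw [← Finset.sum_add_distrib]
    exact Finset.sum_congr rfl fun i _ => by ring
  rw [hsplit]
  -- first sum = FRs t / 2
  have h1 : ∑ i ∈ range t, ((i:ℝ)+1) * rhoP (t-i) = FRs t / 2 := by
    rw [FRs, Finset.sum_div]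
    refine Finset.sum_congr rfl fun i hi => ?_
    rw [mem_range] at hi
    rw [rho_succ _ (by omega), show t-i+1 = t+1-i from by omega]
    ring
  rw [h1]
  -- second sum: as in star1 but over range t ⊆ range (t+1) with m := t
  have h2 : ∑ i ∈ range t, ((i:ℝ)+1) * lamP (i+1) * rhoP (t-i)
      ≤ ((t:ℝ)+4) * muP (t+2) / 4 - ((t:ℝ)+2) * muP (t+1) / 2 := by
    have hmain : ∑ i ∈ range t, ((i:ℝ)+1) * lamP (i+1) * rhoP (t-i)
        ≤ ∑ i ∈ range t, ((i:ℝ)+2) * (muP (i+1) * muP (t+1-i)) / 2 := by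
      refine Finset.sum_le_sum fun i hi => ?_
      rw [mem_range] at hi
      rw [rho_succ _ (by omega), show t-i+1 = t+1-i from by omega]
      have hw := wt_le (j := i+1) (by omega)
      push_cast at hw
      have h3 : 0 ≤ muP (t+1-i) / 2 := by have := mu_pos (t+1-i); positivity
      calc ((i:ℝ)+1) * lamP (i+1) * (muP (t+1-i)/2)
          ≤ ((i:ℝ)+1+1) * muP (i+1) * (muP (t+1-i)/2) :=
            mul_le_mul_of_nonneg_right hw h3
        _ = ((i:ℝ)+2) * (muP (i+1) * muP (t+1-i)) / 2 := by ring
    have hsym := sym_conv t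
    have hfull : ∑ j ∈ range (t+1), ((j:ℝ)+2) * (muP (j+1) * muP (t+1-j))
        = ∑ j ∈ range t, ((j:ℝ)+2) * (muP (j+1) * muP (t+1-j))
          + ((t:ℝ)+2) * muP (t+1) := by
      rw [Finset.sum_range_succ, show t + 1 - t = 1 from by omega, mu_one, mul_one]
    have : ∑ i ∈ range t, ((i:ℝ)+2) * (muP (i+1) * muP (t+1-i)) / 2
        = (∑ i ∈ range t, ((i:ℝ)+2) * (muP (i+1) * muP (t+1-i))) / 2 := Finset.sum_div _ _ _ |>.symm
    rw [this] at hmain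
    linarith
  have hFR := FR_le t ht
  have hr : ((t:ℝ)+1+1) * muP (t+2) = (4*(t+1) - 2) * muP (t+1) := by
    have := mu_ratio (k := t+1) (by omega)
    push_cast at this
    convert this using 2 <;> push_cast <;> ring
  have hmu1 := mu_pos (t+1)
  have hmu2 := mu_pos (t+2)
  push_cast
  rcases Nat.lt_or_ge t 4 with h4 | h4
  · -- small cases t = 1, 2, 3 (s = 2,3,4): direct computation
    interval_cases t
    · have e1 : FRs 1 = 1 := by
        rw [FRs, Finset.sum_range_one]; norm_num [mu_two]
      have e2 : ∑ i ∈ range 1, ((i:ℝ)+1) * lamP (i+1) * rhoP (1-i) = 1/2 := by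
        rw [Finset.sum_range_one]
        norm_num [lam_one, rhoP, mu_two]
      rw [e1, e2]
      norm_num [mu_two]
    · have e1 : FRs 2 = 4 := by
        rw [FRs, Finset.sum_range_succ, Finset.sum_range_one]
        norm_num [mu_two, mu_three]
      have e2 : ∑ i ∈ range 2, ((i:ℝ)+1) * lamP (i+1) * rhoP (2-i) = 5/2 := by
        rw [Finset.sum_range_succ, Finset.sum_range_one]
        norm_num [lamP, rhoP, mu_two, mu_three]
      rw [e1, e2]
      norm_num [mu_three]
    · have e1 : FRs 3 = 12 := by
        rw [FRs, Finset.sum_range_succ, Finset.sum_range_succ, Finset.sum_range_one]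
        norm_num [mu_two, mu_three, mu_four]
      have e2 : ∑ i ∈ range 3, ((i:ℝ)+1) * lamP (i+1) * rhoP (3-i) = 19/2 := by
        rw [Finset.sum_range_succ, Finset.sum_range_succ, Finset.sum_range_one]
        norm_num [lamP, rhoP, mu_two, mu_three, mu_four]
      rw [e1, e2]
      norm_num [mu_four]
  · -- general case t ≥ 4 (s ≥ 5)
    have ha : (14:ℝ) ≤ muP (t+1) := by
      calc (14:ℝ) = muP 5 := mu_five.symm
        _ ≤ muP (t+1) := mu_mono (by omega)
    have ht4 : (4:ℝ) ≤ (t:ℝ) := by exact_mod_cast h4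
    have hr4 : ((t:ℝ)+4)*(((t:ℝ)+1+1) * muP (t+2)) = ((t:ℝ)+4)*((4*((t:ℝ)+1) - 2) * muP (t+1)) := by
      rw [hr]
    have hq : (0:ℝ) ≤ 2*(t:ℝ)^2 - 2*(t:ℝ) := by nlinarith
    have hp : 14*(2*(t:ℝ)^2 - 2*(t:ℝ)) ≤ (2*(t:ℝ)^2 - 2*(t:ℝ)) * muP (t+1) :=
      by nlinarith [mul_le_mul_of_nonneg_left ha hq]
    have h6 : ((t:ℝ)+2) * (4*((t:ℝ)+1) + ((t:ℝ)+4)*muP (t+2))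
        ≤ ((t:ℝ)+2) * ((6*(t:ℝ)+4)*muP (t+1)) := by nlinarith [hr4, hp, ht4]
    have key : 4*((t:ℝ)+1) + ((t:ℝ)+4)*muP (t+2) ≤ (6*(t:ℝ)+4)*muP (t+1) := by
      have hpos : (0:ℝ) < (t:ℝ)+2 := by positivity
      exact le_of_mul_le_mul_left h6 hpos
    linarith [h2, hFR]

lemma vnormP_nonneg {σ : Type*} [Fintype σ] (V : σ → MvPolynomial σ ℂ) : 0 ≤ vnormP V :=
  Finset.sum_nonneg fun _ _ => pnormP_nonneg _

lemma vnormP_add_le {σ : Type*} [Fintype σ] (V U : σ → MvPolynomial σ ℂ) :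
    vnormP (V + U) ≤ vnormP V + vnormP U := by
  rw [vnormP, vnormP, vnormP, ← Finset.sum_add_distrib]
  exact Finset.sum_le_sum fun l _ => pnormP_add_le _ _

lemma vnormP_sub_le {σ : Type*} [Fintype σ] (V U : σ → MvPolynomial σ ℂ) :
    vnormP (V - U) ≤ vnormP V + vnormP U := by
  rw [vnormP, vnormP, vnormP, ← Finset.sum_add_distrib]
  refine Finset.sum_le_sum fun l _ => ?_
  rw [Pi.sub_apply, sub_eq_add_neg]
  exact le_trans (pnormP_add_le _ _) (by rw [pnormP_neg])

lemma vnormP_smul_le {σ : Type*} [Fintype σ] (c : ℂ) (V : σ → MvPolynomial σ ℂ) :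
    vnormP (c • V) ≤ ‖c‖ * vnormP V := by
  rw [vnormP, vnormP, Finset.mul_sum]
  exact Finset.sum_le_sum fun l _ => pnormP_smul_le c (V l)

lemma vnormP_sum_le {σ : Type*} [Fintype σ] {ι : Type*} (t : Finset ι)
    (F : ι → σ → MvPolynomial σ ℂ) :
    vnormP (∑ i ∈ t, F i) ≤ ∑ i ∈ t, vnormP (F i) := by
  rw [vnormP]
  calc ∑ l, pnormP ((∑ i ∈ t, F i) l) ≤ ∑ l, ∑ i ∈ t, pnormP (F i l) := by
        refine Finset.sum_le_sum fun l _ => ?_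
        rw [Finset.sum_apply]
        exact pnormP_sum_le _ _
    _ = ∑ i ∈ t, ∑ l, pnormP (F i l) := Finset.sum_comm
    _ = ∑ i ∈ t, vnormP (F i) := rfl

lemma homog_degree {σ : Type*} {f : MvPolynomial σ ℂ} {nn : ℕ} (h : f.IsHomogeneous nn)
    {m : σ →₀ ℕ} (hm : f.coeff m ≠ 0) : (m.sum fun _ e => e) = nn := by
  have := h hm
  simpa [Finsupp.weight, Finsupp.degree, Finsupp.linearCombination, Finsupp.sum] using this


/-- The comparison sequence for the Lie transform bound. -/
noncomputable def Kq (R : ℕ) (e : ℕ → ℝ) : ℕ → ℝ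
  | 0 => 1
  | k + 1 => ((k + 1 : ℕ) : ℝ)⁻¹ *
      ∑ j ∈ Finset.range (k + 1), ((j:ℝ)+1) * ((R : ℝ) * e (j + 1) * Kq R e (k - j))
  decreasing_by omega

lemma Kq_nonneg (R : ℕ) (e : ℕ → ℝ) (he : ∀ i, 0 ≤ e i) : ∀ m, 0 ≤ Kq R e m := by
  intro m
  induction m using Nat.strong_induction_on with
  | _ m ih =>
    match m with
    | 0 => rw [Kq]; norm_num
    | k + 1 =>
      rw [Kq]
      refine mul_nonneg (by positivity) (Finset.sum_nonneg fun j hj => ?_)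
      refine mul_nonneg (by positivity) (mul_nonneg (mul_nonneg (by positivity) (he _)) ?_)
      exact ih _ (Nat.lt_succ_of_le (Nat.sub_le k j))

lemma EopF_zero {F : Type*} [AddCommGroup F] [Module ℂ F] (L : ℕ → (F → F)) (f : F) :
    EopF L 0 f = f := by rw [EopF]; rfl

lemma EopF_succ {F : Type*} [AddCommGroup F] [Module ℂ F] (L : ℕ → (F → F)) (s : ℕ) (f : F) :
    EopF L (s+1) f = ((s + 1 : ℕ) : ℂ)⁻¹ •
      ∑ j ∈ Finset.range (s + 1), (((j + 1 : ℕ) : ℂ)) • (L (j + 1) (EopF L (s - j) f)) := by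
  rw [EopF]
  simp [Finset.sum_apply, Pi.smul_apply]

/-- Main Lie-transform estimate: degree and norm of `E_m f`. -/
lemma Egen {σ : Type*} [Fintype σ] [DecidableEq σ] (Y : ℕ → σ → MvPolynomial σ ℂ)
    (e : ℕ → ℝ) (R M : ℕ)
    (hY : ∀ i, 1 ≤ i → i ≤ M → vnormP (Y i) ≤ e i)
    (he : ∀ i, 0 ≤ e i)
    (hYd : ∀ i, 1 ≤ i → i ≤ M → ∀ l, (Y i l).totalDegree ≤ i + 1) :
    ∀ m, m ≤ M → ∀ (d : ℕ) (f : MvPolynomial σ ℂ), f.totalDegree ≤ d → 1 ≤ d →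
      d + m ≤ R + 1 →
      (EopF (fun i => lieV (Y i)) m f).totalDegree ≤ d + m ∧
      pnormP (EopF (fun i => lieV (Y i)) m f) ≤ Kq R e m * pnormP f := by
  intro m
  induction m using Nat.strong_induction_on with
  | _ m ih =>
    match m with
    | 0 =>
      intro _ d f hfd hd1 _
      rw [EopF_zero, Kq]
      exact ⟨le_trans hfd (by omega), by rw [one_mul]⟩
    | k + 1 =>
      intro hM d f hfd hd1 hdR
      rw [EopF_succ, Kq]
      have hsub : ∀ j, j ∈ range (k+1) → k - j < k + 1 := fun j _ =>
        Nat.lt_succ_of_le (Nat.sub_le k j)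
      -- inner bounds from the induction hypothesis
      have hinner : ∀ j ∈ range (k+1),
          (EopF (fun i => lieV (Y i)) (k-j) f).totalDegree ≤ d + (k-j) ∧
          pnormP (EopF (fun i => lieV (Y i)) (k-j) f) ≤ Kq R e (k-j) * pnormP f := by
        intro j hj
        exact ih (k-j) (hsub j hj) (by omega) d f hfd hd1 (by omega)
      constructor
      · -- degree bound
        refine le_trans (totalDegree_smul_le _ _) ?_
        refine le_trans (totalDegree_finset_sum _ _) (Finset.sup_le fun j hj => ?_)
        rw [mem_range] at hj
        refine le_trans (totalDegree_smul_le _ _) ?_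
        have hdeg := (hinner j (mem_range.mpr hj)).1
        have hYdj := hYd (j+1) (by omega) (by omega)
        have h5 : (EopF (fun i => lieV (Y i)) (k-j) f).totalDegree ≤ (d + (k-j) - 1) + 1 := by
          omega
        have := totalDegree_lieV_le (Y (j+1)) _ (d + (k-j) - 1) (j+2) h5 hYdj
        omega
      · -- norm bound
        refine le_trans (pnormP_smul_le _ _) ?_
        have hnormc : ‖(((k+1 : ℕ)) : ℂ)⁻¹‖ = (((k+1:ℕ)):ℝ)⁻¹ := by
          rw [norm_inv, Complex.norm_natCast]
        rw [hnormc, mul_assoc]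
        refine mul_le_mul_of_nonneg_left ?_ (by positivity)
        refine le_trans (pnormP_sum_le _ _) ?_
        rw [Finset.sum_mul]
        refine Finset.sum_le_sum fun j hj => ?_
        rw [mem_range] at hj
        refine le_trans (pnormP_smul_le _ _) ?_
        have hc : ‖(((j+1:ℕ)) : ℂ)‖ = ((j:ℝ)+1) := by
          rw [Complex.norm_natCast]; push_cast; ring
        rw [hc]
        have hlie : pnormP (lieV (Y (j+1)) (EopF (fun i => lieV (Y i)) (k-j) f))
            ≤ (R:ℝ) * e (j+1) * (Kq R e (k-j) * pnormP f) := by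
          have hdeg := (hinner j (mem_range.mpr hj)).1
          have h1 := pnormP_lieV_le (Y (j+1)) (EopF (fun i => lieV (Y i)) (k-j) f)
            (d + (k-j)) hdeg
          refine le_trans h1 ?_
          have hRk : ((d + (k-j) : ℕ) : ℝ) ≤ (R:ℝ) := by
            have : d + (k-j) ≤ R := by omega
            exact_mod_cast this
          have hYn := hY (j+1) (by omega) (by omega)
          have hEn := (hinner j (mem_range.mpr hj)).2
          have hnn2 := vnormP_nonneg (Y (j+1))
          have hnn3 := pnormP_nonneg (EopF (fun i => lieV (Y i)) (k-j) f)
          have hnn4 := pnormP_nonneg f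
          have hnn5 := Kq_nonneg R e he (k-j)
          have h2 : ((d + (k-j) : ℕ) : ℝ) * vnormP (Y (j+1)) ≤ (R:ℝ) * e (j+1) :=
            mul_le_mul hRk hYn hnn2 (by positivity)
          exact mul_le_mul h2 hEn hnn3 (mul_nonneg (by positivity) (he _))
        calc ((j:ℝ)+1) * pnormP (lieV (Y (j+1)) (EopF (fun i => lieV (Y i)) (k-j) f))
            ≤ ((j:ℝ)+1) * ((R:ℝ) * e (j+1) * (Kq R e (k-j) * pnormP f)) :=
              mul_le_mul_of_nonneg_left hlie (by positivity)
          _ = ((j:ℝ)+1) * ((R:ℝ) * e (j+1) * Kq R e (k-j)) * pnormP f := by ring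

lemma Kq_le (R : ℕ) (δ A : ℝ) (hδ : 0 ≤ δ) (hA : 0 ≤ A) (hRA : (R:ℝ) * A ≤ δ / 2)
    (t T' : ℕ → ℝ) (mb : ℕ)
    (hT'0 : 1 ≤ T' 0) (hT'nn : ∀ m, 0 ≤ T' m) (htnn : ∀ i, 0 ≤ t i)
    (hprod : ∀ j k, j ≤ k → k + 1 ≤ mb → t (j+1) * T' (k-j) ≤ T' (k+1)) :
    ∀ m, m ≤ mb → Kq R (fun i => t i * lamP i * δ^(i-1) * A) m ≤ T' m * rhoP m * δ^m := by
  intro m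
  induction m using Nat.strong_induction_on with
  | _ m ih =>
    match m with
    | 0 =>
      intro _
      rw [Kq, rho_zero]
      simpa using hT'0
    | k + 1 =>
      intro hmb
      rw [Kq]
      have hRAnn : (0:ℝ) ≤ (R:ℝ) * A := by positivity
      have hsummand : ∀ j ∈ range (k+1),
          ((j:ℝ)+1) * ((R : ℝ) * (fun i => t i * lamP i * δ^(i-1) * A) (j+1)
              * Kq R (fun i => t i * lamP i * δ^(i-1) * A) (k - j))
          ≤ ((j:ℝ)+1) * lamP (j+1) * rhoP (k-j) * ((δ/2) * δ^k * T' (k+1)) := by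
        intro j hj
        rw [mem_range] at hj
        have hbeta : (fun i => t i * lamP i * δ^(i-1) * A) (j+1)
            = t (j+1) * lamP (j+1) * δ^j * A := by
          simp
        rw [hbeta]
        have hKle := ih (k-j) (by omega) (by omega)
        have hpr := hprod j k (by omega) hmb
        have hmid : (R:ℝ) * (t (j+1) * lamP (j+1) * δ^j * A)
              * Kq R (fun i => t i * lamP i * δ^(i-1) * A) (k-j)
            ≤ (δ/2) * (lamP (j+1) * rhoP (k-j) * δ^k * T' (k+1)) := by
          set u := Kq R (fun i => t i * lamP i * δ^(i-1) * A) (k-j) with hu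
          have hnn1 : (0:ℝ) ≤ (R:ℝ)*A * lamP (j+1) * δ^j := by
            have := lam_nonneg (j+1); positivity
          calc (R:ℝ) * (t (j+1) * lamP (j+1) * δ^j * A) * u
              = ((R:ℝ)*A * lamP (j+1) * δ^j) * (t (j+1) * u) := by ring
            _ ≤ ((R:ℝ)*A * lamP (j+1) * δ^j) * (t (j+1) * (T' (k-j) * rhoP (k-j) * δ^(k-j))) := by
                refine mul_le_mul_of_nonneg_left ?_ hnn1
                exact mul_le_mul_of_nonneg_left hKle (htnn _)
            _ = ((R:ℝ)*A) * (lamP (j+1) * (rhoP (k-j) * (δ^j*δ^(k-j)))) * (t (j+1) * T' (k-j)) := by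
                ring
            _ ≤ ((R:ℝ)*A) * (lamP (j+1) * (rhoP (k-j) * (δ^j*δ^(k-j)))) * T' (k+1) := by
                refine mul_le_mul_of_nonneg_left hpr ?_
                have := lam_nonneg (j+1)
                have := rho_nonneg (k-j)
                positivity
            _ = ((R:ℝ)*A) * (lamP (j+1) * (rhoP (k-j) * δ^k) * T' (k+1)) := by
                rw [← pow_add, show j + (k-j) = k from by omega]
                ring
            _ ≤ (δ/2) * (lamP (j+1) * (rhoP (k-j) * δ^k) * T' (k+1)) := by
                refine mul_le_mul_of_nonneg_right hRA ?_
                have := lam_nonneg (j+1)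
                have := rho_nonneg (k-j)
                have := hT'nn (k+1)
                positivity
            _ = (δ/2) * (lamP (j+1) * rhoP (k-j) * δ^k * T' (k+1)) := by ring
        calc ((j:ℝ)+1) * ((R : ℝ) * (t (j+1) * lamP (j+1) * δ^j * A)
                * Kq R (fun i => t i * lamP i * δ^(i-1) * A) (k - j))
            ≤ ((j:ℝ)+1) * ((δ/2) * (lamP (j+1) * rhoP (k-j) * δ^k * T' (k+1))) :=
              mul_le_mul_of_nonneg_left hmid (by positivity)
          _ = ((j:ℝ)+1) * lamP (j+1) * rhoP (k-j) * ((δ/2) * δ^k * T' (k+1)) := by ring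
      have hsum : ∑ j ∈ range (k+1), ((j:ℝ)+1) * ((R : ℝ)
            * (fun i => t i * lamP i * δ^(i-1) * A) (j+1)
              * Kq R (fun i => t i * lamP i * δ^(i-1) * A) (k - j))
          ≤ (2*((k:ℝ)+1)*rhoP (k+1)) * ((δ/2) * δ^k * T' (k+1)) := by
        calc ∑ j ∈ range (k+1), ((j:ℝ)+1) * ((R : ℝ)
              * (fun i => t i * lamP i * δ^(i-1) * A) (j+1)
                * Kq R (fun i => t i * lamP i * δ^(i-1) * A) (k - j))
            ≤ ∑ j ∈ range (k+1), ((j:ℝ)+1) * lamP (j+1) * rhoP (k-j)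
                * ((δ/2) * δ^k * T' (k+1)) := Finset.sum_le_sum hsummand
          _ = (∑ j ∈ range (k+1), ((j:ℝ)+1) * lamP (j+1) * rhoP (k-j))
                * ((δ/2) * δ^k * T' (k+1)) := by rw [← Finset.sum_mul]
          _ ≤ (2*((k:ℝ)+1)*rhoP (k+1)) * ((δ/2) * δ^k * T' (k+1)) := by
              refine mul_le_mul_of_nonneg_right (star1 k) ?_
              have := hT'nn (k+1)
              positivity
      have hle := mul_le_mul_of_nonneg_left hsum
        (show (0:ℝ) ≤ ((k + 1 : ℕ) : ℝ)⁻¹ by positivity)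
      refine le_trans hle (le_of_eq ?_)
      have hk : ((k+1:ℕ):ℝ) ≠ 0 := by positivity
      push_cast
      field_simp
      ring

end Aux

open Aux

/-- estimate of the generating sequence: if `‖W_s‖ ≤ C^{s-1} A`
and the generating sequence `X_1,…,X_r` with normal form terms `Z_1,…,Z_r` is
produced by recursively solving the homological equations
`D_ω X_s + Z_s = Ψ_s` with `Z_s = P_𝒩 Ψ_s` (i.e. `D_ω Z_s = 0`) and
`X_s = D_ω⁻¹ P_ℛ Ψ_s` (i.e. `X_s` in the range of `D_ω`), then for `1 ≤ s ≤ r`: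
`‖X_s‖ ≤ T_s B_r^{s-1} A / s` and `‖Z_s‖ ≤ T_{s-1} B_r^{s-1} A / s`, with
`B_r = 4C + 8(r+2)A`. -/
theorem generating_sequence_estimate (n r : ℕ) (ω : Fin n → ℝ)
    (A C : ℝ) (hA : 0 < A) (hC : 0 ≤ C)
    (hαpos : ∀ s, 1 ≤ s → s ≤ r → 0 < alphaSeq ω s)
    (hdiv : ∀ s, 1 ≤ s → s ≤ r → ∀ (m : (Fin n ⊕ Fin n) →₀ ℕ) (l : Fin n ⊕ Fin n),
      (m.sum fun _ e => e) = s + 1 → cEig ω m l ≠ 0 →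
      alphaSeq ω s ≤ ‖cEig ω m l‖)
    (W X Z : ℕ → (Fin n ⊕ Fin n → MvPolynomial (Fin n ⊕ Fin n) ℂ))
    (hWh : ∀ s, 1 ≤ s → ∀ l, (W s l).IsHomogeneous (s + 1))
    (hXh : ∀ s, 1 ≤ s → s ≤ r → ∀ l, (X s l).IsHomogeneous (s + 1))
    (hZh : ∀ s, 1 ≤ s → s ≤ r → ∀ l, (Z s l).IsHomogeneous (s + 1))
    (hW : ∀ s, 1 ≤ s → vnormP (W s) ≤ C ^ (s - 1) * A)
    (hsol : ∀ s, 1 ≤ s → s ≤ r →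
      (RVF ω (X s) - X s) + Z s = PsiRHS ω W X Z s ∧
      RVF ω (Z s) - Z s = 0 ∧
      (∃ U : Fin n ⊕ Fin n → MvPolynomial (Fin n ⊕ Fin n) ℂ,
        X s = RVF ω U - U)) :
    ∀ s, 1 ≤ s → s ≤ r →
      vnormP (X s) ≤ Tseq ω s * ((4 * C + 8 * (r + 2) * A) ^ (s - 1) * A) / s ∧
      vnormP (Z s) ≤ Tseq ω (s - 1) * ((4 * C + 8 * (r + 2) * A) ^ (s - 1) * A) / s := by
  set δ : ℝ := C + 2 * ((r:ℝ) + 2) * A with hδdef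
  have hδpos : 0 < δ := by positivity
  have hδ : (0:ℝ) ≤ δ := le_of_lt hδpos
  have hCδ : C ≤ δ := by nlinarith
  have hRA : ((r:ℕ):ℝ) * A ≤ δ / 2 := by
    have : (0:ℝ) ≤ (r:ℝ) := by positivity
    nlinarith
  -- clamped T sequences
  set tX : ℕ → ℝ := fun i => if i ≤ r then Tseq ω i else 0 with htXdef
  set tZ : ℕ → ℝ := fun i => if i ≤ r then Tseq ω (i-1) else 0 with htZdef
  have htXnn : ∀ i, 0 ≤ tX i := by
    intro i; rw [htXdef]; dsimp only
    split
    · exact le_of_lt (T_pos hαpos (by omega))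
    · exact le_refl 0
  have htZnn : ∀ i, 0 ≤ tZ i := by
    intro i; rw [htZdef]; dsimp only
    split
    · exact le_of_lt (T_pos hαpos (by omega))
    · exact le_refl 0
  have hT0 : Tseq ω 0 = 1 := by rw [Tseq]
  have hT'X0 : 1 ≤ tX 0 := by
    rw [htXdef]; dsimp only; rw [if_pos (Nat.zero_le r), hT0]
  have hT'Z0 : 1 ≤ tZ 0 := by
    rw [htZdef]; dsimp only; rw [if_pos (Nat.zero_le r)]; norm_num [hT0]
  have hprodX : ∀ j k, j ≤ k → k + 1 ≤ r → tX (j+1) * tX (k-j) ≤ tX (k+1) := by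
    intro j k hjk hkr
    rw [htXdef]; dsimp only
    rw [if_pos (by omega), if_pos (by omega), if_pos (by omega)]
    calc Tseq ω (j+1) * Tseq ω (k-j) ≤ Tseq ω ((j+1) + (k-j)) :=
          T_submult hαpos (by omega)
      _ = Tseq ω (k+1) := by congr 1; omega
  have hprodZ : ∀ j k, j ≤ k → k + 1 ≤ r → tZ (j+1) * tZ (k-j) ≤ tZ (k+1) := by
    intro j k hjk hkr
    rw [htZdef]; dsimp only
    rw [if_pos (by omega), if_pos (by omega), if_pos (by omega)]
    rw [show (j+1)-1 = j from by omega, show (k+1)-1 = k from by omega]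
    rcases Nat.eq_zero_or_pos (k-j) with h0 | h0
    · rw [h0]
      rw [show (0:ℕ)-1 = 0 from rfl, hT0, mul_one]
      exact T_mono hαpos (by omega) (by omega)
    · calc Tseq ω j * Tseq ω ((k-j)-1) ≤ Tseq ω (j + ((k-j)-1)) :=
            T_submult hαpos (by omega)
        _ ≤ Tseq ω k := T_mono hαpos (by omega) (by omega)
  have heX : ∀ i, 0 ≤ (fun i => tX i * lamP i * δ^(i-1) * A) i := by
    intro i; dsimp only
    have := htXnn i; have := lam_nonneg i; positivity
  have heZ : ∀ i, 0 ≤ (fun i => tZ i * lamP i * δ^(i-1) * A) i := by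
    intro i; dsimp only
    have := htZnn i; have := lam_nonneg i; positivity
  have hKqX : ∀ m, m ≤ r → Kq r (fun i => tX i * lamP i * δ^(i-1) * A) m
      ≤ tX m * rhoP m * δ^m :=
    Kq_le r δ A hδ hA.le hRA tX tX r hT'X0 htXnn htXnn hprodX
  have hKqZ : ∀ m, m ≤ r → Kq r (fun i => tZ i * lamP i * δ^(i-1) * A) m
      ≤ tZ m * rhoP m * δ^m :=
    Kq_le r δ A hδ hA.le hRA tZ tZ r hT'Z0 htZnn htZnn hprodZ
  -- main claim with the sharp constants
  have main : ∀ s, 1 ≤ s → s ≤ r →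
      vnormP (X s) ≤ Tseq ω s * lamP s * δ^(s-1) * A ∧
      vnormP (Z s) ≤ Tseq ω (s-1) * lamP s * δ^(s-1) * A := by
    intro s
    induction s using Nat.strong_induction_on with
    | _ s ih =>
      intro hs1 hsr
      obtain ⟨eq1, eq2, U, eq3⟩ := hsol s hs1 hsr
      have hcoeffPsi : ∀ (l : Fin n ⊕ Fin n) (m' : (Fin n ⊕ Fin n) →₀ ℕ),
          cEig ω m' l * ((X s l).coeff m') + (Z s l).coeff m'
          = ((PsiRHS ω W X Z s) l).coeff m' := by
        intro l m'
        have h2 := congrArg (MvPolynomial.coeff m') (congrFun eq1 l)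
        rw [Pi.add_apply, MvPolynomial.coeff_add, coeff_DV] at h2
        exact h2
      have hz0 : ∀ (l : Fin n ⊕ Fin n) (m' : (Fin n ⊕ Fin n) →₀ ℕ),
          cEig ω m' l * ((Z s l).coeff m') = 0 := by
        intro l m'
        have h := congrFun eq2 l
        have h3 := congrArg (MvPolynomial.coeff m') h
        rw [coeff_DV] at h3
        simpa using h3
      have hx0 : ∀ (l : Fin n ⊕ Fin n) (m' : (Fin n ⊕ Fin n) →₀ ℕ),
          (X s l).coeff m' = cEig ω m' l * ((U l).coeff m') := by
        intro l m'
        have h := congrFun eq3 l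
        have h3 := congrArg (MvPolynomial.coeff m') h
        rw [coeff_DV] at h3
        exact h3
      have hαs := hαpos s hs1 hsr
      have hXle : vnormP (X s) ≤ (alphaSeq ω s)⁻¹ * vnormP (PsiRHS ω W X Z s) := by
        rw [vnormP, vnormP, Finset.mul_sum]
        refine Finset.sum_le_sum fun l _ => ?_
        refine pnormP_le_of_coeff_le (by positivity) fun m' => ?_
        by_cases hc : (X s l).coeff m' = 0
        · rw [hc, norm_zero]
          positivity
        · have hE : cEig ω m' l ≠ 0 := fun h0 => hc (by rw [hx0 l m', h0, zero_mul])
          have hdeg := homog_degree (hXh s hs1 hsr l) hc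
          have hα := hdiv s hs1 hsr m' l hdeg hE
          have hzc : (Z s l).coeff m' = 0 := by
            rcases mul_eq_zero.mp (hz0 l m') with h | h
            · exact absurd h hE
            · exact h
          have hpsi : ((PsiRHS ω W X Z s) l).coeff m' = cEig ω m' l * (X s l).coeff m' := by
            rw [← hcoeffPsi l m', hzc, add_zero]
          rw [hpsi, norm_mul]
          calc ‖(X s l).coeff m'‖
              = (alphaSeq ω s)⁻¹ * (alphaSeq ω s * ‖(X s l).coeff m'‖) := by
                field_simp
            _ ≤ (alphaSeq ω s)⁻¹ * (‖cEig ω m' l‖ * ‖(X s l).coeff m'‖) := by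
                refine mul_le_mul_of_nonneg_left ?_ (by positivity)
                refine mul_le_mul_of_nonneg_right ?_ (norm_nonneg _)
                exact hα
      have hZle : vnormP (Z s) ≤ vnormP (PsiRHS ω W X Z s) := by
        rw [vnormP, vnormP]
        refine Finset.sum_le_sum fun l _ => ?_
        have h := pnormP_le_of_coeff_le (f := Z s l) (g := (PsiRHS ω W X Z s) l) (t := 1)
          zero_le_one (fun m' => ?_)
        · simpa using h
        · by_cases hc : (Z s l).coeff m' = 0
          · rw [hc, norm_zero]
            have := pnormP_nonneg ((PsiRHS ω W X Z s) l)
            have := norm_nonneg (((PsiRHS ω W X Z s) l).coeff m')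
            linarith
          · have hE : cEig ω m' l = 0 := by
              rcases mul_eq_zero.mp (hz0 l m') with h | h
              · exact h
              · exact absurd h hc
            have hpsi : ((PsiRHS ω W X Z s) l).coeff m' = (Z s l).coeff m' := by
              rw [← hcoeffPsi l m', hE, zero_mul, zero_add]
            rw [hpsi, one_mul]
      -- the Ψ estimate
      have hPsi : vnormP (PsiRHS ω W X Z s) ≤ Tseq ω (s-1) * lamP s * δ^(s-1) * A := by
        rcases Nat.eq_or_lt_of_le hs1 with h1 | h12
        · -- s = 1
          have hs1' : s = 1 := h1.symm
          subst hs1'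
          have hempty : PsiRHS ω W X Z 1 = W 1 := by
            rw [PsiRHS]
            simp
          rw [hempty, show (1:ℕ)-1 = 0 from rfl, lam_one, hT0]
          have := hW 1 le_rfl
          simpa using this
        · -- s ≥ 2
          have hs2 : 2 ≤ s := h12
          have hYX : ∀ i, 1 ≤ i → i ≤ s-1 →
              vnormP (X i) ≤ (fun i => tX i * lamP i * δ^(i-1) * A) i := by
            intro i hi1 hi2
            dsimp only
            rw [htXdef]; dsimp only; rw [if_pos (by omega)]
            exact (ih i (by omega) hi1 (by omega)).1
          have hYZ : ∀ i, 1 ≤ i → i ≤ s-1 →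
              vnormP (Z i) ≤ (fun i => tZ i * lamP i * δ^(i-1) * A) i := by
            intro i hi1 hi2
            dsimp only
            rw [htZdef]; dsimp only; rw [if_pos (by omega)]
            exact (ih i (by omega) hi1 (by omega)).2
          have hYdX : ∀ i, 1 ≤ i → i ≤ s-1 → ∀ l, (X i l).totalDegree ≤ i+1 :=
            fun i hi1 hi2 l => (hXh i hi1 (by omega) l).totalDegree_le
          have hYdZ : ∀ i, 1 ≤ i → i ≤ s-1 → ∀ l, (Z i l).totalDegree ≤ i+1 :=
            fun i hi1 hi2 l => (hZh i hi1 (by omega) l).totalDegree_le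
          have hEgX := Egen X (fun i => tX i * lamP i * δ^(i-1) * A) r (s-1) hYX heX hYdX
          have hEgZ := Egen Z (fun i => tZ i * lamP i * δ^(i-1) * A) r (s-1) hYZ heZ hYdZ
          set K : ℝ := Tseq ω (s-1) * δ^(s-1) * A with hKdef
          have hKnn : 0 ≤ K := by
            rw [hKdef]
            have := T_pos hαpos (show s-1 ≤ r by omega)
            positivity
          have hterm : ∀ j ∈ Ico 1 s,
              vnormP ((j:ℂ) • ((fun l => EopF (fun i => lieV (X i)) (s-j) (W j l))
                - (fun l => EopF (fun i => lieV (Z i)) (s-j) (RVF ω (X j) l))))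
              ≤ (j:ℝ) * rhoP (s-j) * (1 + lamP j) * K := by
            intro j hj
            rw [mem_Ico] at hj
            obtain ⟨hj1, hjs⟩ := hj
            have hKqnnX := Kq_nonneg r (fun i => tX i * lamP i * δ^(i-1) * A) heX (s-j)
            have hKqnnZ := Kq_nonneg r (fun i => tZ i * lamP i * δ^(i-1) * A) heZ (s-j)
            -- F bound
            have hF : vnormP (fun l => EopF (fun i => lieV (X i)) (s-j) (W j l))
                ≤ rhoP (s-j) * K := by
              have hsum : vnormP (fun l => EopF (fun i => lieV (X i)) (s-j) (W j l))
                  ≤ Kq r (fun i => tX i * lamP i * δ^(i-1) * A) (s-j) * vnormP (W j) := by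
                rw [vnormP, vnormP, Finset.mul_sum]
                refine Finset.sum_le_sum fun l _ => ?_
                exact (hEgX (s-j) (by omega) (j+1) (W j l)
                  ((hWh j hj1 l).totalDegree_le) (by omega) (by omega)).2
              have hKq := hKqX (s-j) (by omega)
              have htXv : tX (s-j) = Tseq ω (s-j) := by
                rw [htXdef]; dsimp only; rw [if_pos (by omega)]
              have hWj := hW j hj1
              have hkey : Tseq ω (s-j) * (C^(j-1) * δ^(s-j)) ≤ Tseq ω (s-1) * δ^(s-1) := by
                have h1 : Tseq ω (s-j) ≤ Tseq ω (s-1) := T_mono hαpos (by omega) (by omega)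
                have h2 : C^(j-1) * δ^(s-j) ≤ δ^(s-1) := by
                  calc C^(j-1) * δ^(s-j) ≤ δ^(j-1) * δ^(s-j) := by
                        refine mul_le_mul_of_nonneg_right ?_ (by positivity)
                        exact pow_le_pow_left₀ hC hCδ _
                    _ = δ^(s-1) := by rw [← pow_add]; congr 1; omega
                refine mul_le_mul h1 h2 ?_ (le_of_lt (T_pos hαpos (by omega)))
                positivity
              calc vnormP (fun l => EopF (fun i => lieV (X i)) (s-j) (W j l))
                  ≤ Kq r (fun i => tX i * lamP i * δ^(i-1) * A) (s-j) * vnormP (W j) := hsum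
                _ ≤ (tX (s-j) * rhoP (s-j) * δ^(s-j)) * (C^(j-1) * A) := by
                    refine mul_le_mul hKq hWj (vnormP_nonneg _) ?_
                    have := htXnn (s-j); have := rho_nonneg (s-j); positivity
                _ = (Tseq ω (s-j) * (C^(j-1) * δ^(s-j))) * rhoP (s-j) * A := by
                    rw [htXv]; ring
                _ ≤ (Tseq ω (s-1) * δ^(s-1)) * rhoP (s-j) * A := by
                    refine mul_le_mul_of_nonneg_right ?_ hA.le
                    exact mul_le_mul_of_nonneg_right hkey (rho_nonneg _)
                _ = rhoP (s-j) * K := by rw [hKdef]; ring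
            -- G bound
            have hG : vnormP (fun l => EopF (fun i => lieV (Z i)) (s-j) (RVF ω (X j) l))
                ≤ lamP j * (rhoP (s-j) * K) := by
              have hsum : vnormP (fun l => EopF (fun i => lieV (Z i)) (s-j) (RVF ω (X j) l))
                  ≤ Kq r (fun i => tZ i * lamP i * δ^(i-1) * A) (s-j) * vnormP (X j) := by
                rw [vnormP, vnormP, Finset.mul_sum]
                refine Finset.sum_le_sum fun l _ => ?_
                have hdegf : (RVF ω (X j) l).totalDegree ≤ j+1 :=
                  le_trans (totalDegree_RVF_le ω (X j) l) ((hXh j hj1 (by omega) l).totalDegree_le)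
                have h5 := (hEgZ (s-j) (by omega) (j+1) (RVF ω (X j) l)
                  hdegf (by omega) (by omega)).2
                refine le_trans h5 ?_
                exact mul_le_mul_of_nonneg_left (pnormP_RVF_le ω (X j) l) hKqnnZ
              have hKq := hKqZ (s-j) (by omega)
              have htZv : tZ (s-j) = Tseq ω ((s-j)-1) := by
                rw [htZdef]; dsimp only; rw [if_pos (by omega)]
              have hXj := (ih j (by omega) hj1 (by omega)).1
              have hkey : (Tseq ω ((s-j)-1) * Tseq ω j) * (δ^(s-j) * δ^(j-1))
                  ≤ Tseq ω (s-1) * δ^(s-1) := by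
                have h1 : Tseq ω ((s-j)-1) * Tseq ω j ≤ Tseq ω (s-1) := by
                  calc Tseq ω ((s-j)-1) * Tseq ω j ≤ Tseq ω (((s-j)-1) + j) :=
                        T_submult hαpos (by omega)
                    _ = Tseq ω (s-1) := by congr 1; omega
                have h2 : δ^(s-j) * δ^(j-1) = δ^(s-1) := by
                  rw [← pow_add]; congr 1; omega
                rw [h2]
                refine mul_le_mul_of_nonneg_right h1 (by positivity)
              calc vnormP (fun l => EopF (fun i => lieV (Z i)) (s-j) (RVF ω (X j) l))
                  ≤ Kq r (fun i => tZ i * lamP i * δ^(i-1) * A) (s-j) * vnormP (X j) := hsum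
                _ ≤ (tZ (s-j) * rhoP (s-j) * δ^(s-j)) * (Tseq ω j * lamP j * δ^(j-1) * A) := by
                    refine mul_le_mul hKq hXj (vnormP_nonneg _) ?_
                    have := htZnn (s-j); have := rho_nonneg (s-j); positivity
                _ = ((Tseq ω ((s-j)-1) * Tseq ω j) * (δ^(s-j) * δ^(j-1))) * rhoP (s-j)
                      * lamP j * A := by rw [htZv]; ring
                _ ≤ (Tseq ω (s-1) * δ^(s-1)) * rhoP (s-j) * lamP j * A := by
                    refine mul_le_mul_of_nonneg_right ?_ hA.le
                    refine mul_le_mul_of_nonneg_right ?_ (lam_nonneg _)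
                    exact mul_le_mul_of_nonneg_right hkey (rho_nonneg _)
                _ = lamP j * (rhoP (s-j) * K) := by rw [hKdef]; ring
            -- combine F and G
            calc vnormP ((j:ℂ) • ((fun l => EopF (fun i => lieV (X i)) (s-j) (W j l))
                  - (fun l => EopF (fun i => lieV (Z i)) (s-j) (RVF ω (X j) l))))
                ≤ ‖((j:ℕ):ℂ)‖ * vnormP ((fun l => EopF (fun i => lieV (X i)) (s-j) (W j l))
                  - (fun l => EopF (fun i => lieV (Z i)) (s-j) (RVF ω (X j) l))) :=
                  vnormP_smul_le _ _
              _ ≤ (j:ℝ) * (vnormP (fun l => EopF (fun i => lieV (X i)) (s-j) (W j l))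
                    + vnormP (fun l => EopF (fun i => lieV (Z i)) (s-j) (RVF ω (X j) l))) := by
                  rw [Complex.norm_natCast]
                  exact mul_le_mul_of_nonneg_left (vnormP_sub_le _ _) (by positivity)
              _ ≤ (j:ℝ) * (rhoP (s-j) * K + lamP j * (rhoP (s-j) * K)) := by
                  exact mul_le_mul_of_nonneg_left (add_le_add hF hG) (by positivity)
              _ = (j:ℝ) * rhoP (s-j) * (1 + lamP j) * K := by ring
          -- assemble the Ψ bound
          have hsnn : (0:ℝ) < (s:ℝ) := by positivity
          have hnorm_s : ‖((s:ℕ):ℂ)⁻¹‖ = ((s:ℕ):ℝ)⁻¹ := by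
            rw [norm_inv, Complex.norm_natCast]
          have hsum1 : vnormP (∑ j ∈ Ico 1 s, ((j:ℂ)) •
                ((fun l => EopF (fun i => lieV (X i)) (s-j) (W j l))
                - (fun l => EopF (fun i => lieV (Z i)) (s-j) (RVF ω (X j) l))))
              ≤ (∑ j ∈ Ico 1 s, (j:ℝ) * rhoP (s-j) * (1 + lamP j)) * K := by
            refine le_trans (vnormP_sum_le _ _) ?_
            rw [Finset.sum_mul]
            exact Finset.sum_le_sum hterm
          have hstar := star2 hs2
          have hsum2 : (∑ j ∈ Ico 1 s, (j:ℝ) * rhoP (s-j) * (1 + lamP j)) * K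
              ≤ ((s:ℝ) * lamP s - (s:ℝ)) * K := by
            refine mul_le_mul_of_nonneg_right ?_ hKnn
            linarith
          have hCsA : C^(s-1) * A ≤ K := by
            rw [hKdef]
            have h2 : C^(s-1) ≤ δ^(s-1) := pow_le_pow_left₀ hC hCδ _
            have h3 : (1:ℝ) ≤ Tseq ω (s-1) := T_one_le hαpos (by omega)
            have h4 : (0:ℝ) ≤ δ^(s-1)*A := mul_nonneg (pow_nonneg hδ _) hA.le
            have h5 := mul_le_mul_of_nonneg_right h3 h4
            calc C^(s-1) * A ≤ δ^(s-1)*A := mul_le_mul_of_nonneg_right h2 hA.le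
              _ ≤ Tseq ω (s-1) * δ^(s-1) * A := by nlinarith [h5]
          calc vnormP (PsiRHS ω W X Z s)
              ≤ vnormP (W s) + vnormP (((s:ℂ))⁻¹ • ∑ j ∈ Ico 1 s, ((j:ℂ)) •
                  ((fun l => EopF (fun i => lieV (X i)) (s-j) (W j l))
                  - (fun l => EopF (fun i => lieV (Z i)) (s-j) (RVF ω (X j) l)))) := by
                rw [PsiRHS]
                exact vnormP_add_le _ _
            _ ≤ C^(s-1) * A + ((s:ℕ):ℝ)⁻¹ * (((s:ℝ) * lamP s - (s:ℝ)) * K) := by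
                refine add_le_add (hW s hs1) ?_
                refine le_trans (vnormP_smul_le _ _) ?_
                rw [hnorm_s]
                refine mul_le_mul_of_nonneg_left ?_ (by positivity)
                exact le_trans hsum1 hsum2
            _ ≤ K + (lamP s - 1) * K := by
                have he : ((s:ℕ):ℝ)⁻¹ * (((s:ℝ) * lamP s - (s:ℝ)) * K) = (lamP s - 1) * K := by
                  field_simp
                rw [he]
                exact add_le_add_left hCsA _
            _ = Tseq ω (s-1) * lamP s * δ^(s-1) * A := by rw [hKdef]; ring
      -- conclude
      constructor
      · obtain ⟨u, rfl⟩ : ∃ u, s = u + 1 := ⟨s-1, by omega⟩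
        have hTs : Tseq ω (u+1) = Tseq ω u / alphaSeq ω (u+1) := by rw [Tseq]
        calc vnormP (X (u+1))
            ≤ (alphaSeq ω (u+1))⁻¹ * vnormP (PsiRHS ω W X Z (u+1)) := hXle
          _ ≤ (alphaSeq ω (u+1))⁻¹ * (Tseq ω (u+1-1) * lamP (u+1) * δ^(u+1-1) * A) :=
              mul_le_mul_of_nonneg_left hPsi (by positivity)
          _ = Tseq ω (u+1) * lamP (u+1) * δ^(u+1-1) * A := by
              rw [hTs, Nat.add_sub_cancel, div_eq_mul_inv]
              ring
      · exact le_trans hZle hPsi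
  -- convert the main claim to the stated form
  intro s hs1 hsr
  have hm := main s hs1 hsr
  have hB : 4 * C + 8 * ((r:ℝ) + 2) * A = 4 * δ := by rw [hδdef]; ring
  have hlam : lamP s ≤ 4^(s-1) / (s:ℝ) := by
    have := lam_final hs1
    rw [le_div_iff₀ (by positivity : (0:ℝ) < (s:ℝ))]
    linarith [this]
  have hconv : ∀ (T : ℝ), 0 ≤ T → T * lamP s * δ^(s-1) * A
      ≤ T * ((4 * C + 8 * ((r:ℝ) + 2) * A)^(s-1) * A) / s := by
    intro T hT
    rw [hB, mul_pow]
    have h1 : T * lamP s * δ^(s-1) * A ≤ T * (4^(s-1) / (s:ℝ)) * δ^(s-1) * A := by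
      refine mul_le_mul_of_nonneg_right ?_ hA.le
      refine mul_le_mul_of_nonneg_right ?_ (by positivity)
      exact mul_le_mul_of_nonneg_left hlam hT
    refine le_trans h1 (le_of_eq ?_)
    have hsne : ((s:ℕ):ℝ) ≠ 0 := by positivity
    field_simp
  constructor
  · exact le_trans hm.1 (hconv (Tseq ω s) (le_of_lt (T_pos hαpos hsr)))
  · exact le_trans hm.2 (hconv (Tseq ω (s-1)) (le_of_lt (T_pos hαpos (by omega))))
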